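/- Let G be a divisible ordered abelian group and let G′ = ⟨g₁,…,gₙ⟩_div be the divisible hull of finitely many elements, with {g₁,…,gₙ} a valuation basis of G′. Suppose h₁ ≪ h₂ ≪ … ≪ h_l enumerate representatives of the archimedean classes of the gᵢ, with g_i ∼ h_{j_i} and r_{j_i} := g_i/h_{j_i} ∈ ℝ. Then for integers s₁,…,sₙ with largest-valuation nonzero part s_{i_1}g_{i_1} + … + s_{i_k}g_{i_k} (all g_{i_m} ∼ h for a common h), the sum s₁g₁ + … + sₙgₙ is positive if and only if s_{i_1} r_{j_{i_1}} + … + s_{i_k} r_{j_{i_k}} > 0. -/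

import Mathlib

/-- Archimedean equivalence: `x ∼ y` iff `∃ n ∈ ℕ, n|x| ≥ |y|` and `n|y| ≥ |x|`. -/
def archEquiv {G : Type*} [AddCommGroup G] [LinearOrder G] [IsOrderedAddMonoid G] (x y : G) : Prop :=
  ∃ n : ℕ, |y| ≤ n • |x| ∧ |x| ≤ n • |y|

/-- `vlt x y` expresses `v x < v y` for the natural valuation:
`v x < v y` iff `∀ n, n|y| < |x|`. -/
def vlt {G : Type*} [AddCommGroup G] [LinearOrder G] [IsOrderedAddMonoid G] (x y : G) : Prop :=
  ∀ n : ℕ, n • |y| < |x|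

/-- `vle x y` expresses `v x ≤ v y`. -/
def vle {G : Type*} [AddCommGroup G] [LinearOrder G] [IsOrderedAddMonoid G] (x y : G) : Prop :=
  ¬ vlt y x

/-- `veq x y` expresses `v x = v y`. -/
def veq {G : Type*} [AddCommGroup G] [LinearOrder G] [IsOrderedAddMonoid G] (x y : G) : Prop :=
  vle x y ∧ vle y x

/-- The real number `g/h := sup {q ∈ ℚ : q • h < g}` for archimedean-equivalent
positive `g, h`. -/
noncomputable def ratio {G : Type*} [AddCommGroup G] [LinearOrder G] [IsOrderedAddMonoid G] [Module ℚ G]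
    (g h : G) : ℝ :=
  sSup {r : ℝ | ∃ q : ℚ, r = (q : ℝ) ∧ q • h < g}

section Helpers

variable {G : Type*} [AddCommGroup G] [LinearOrder G] [IsOrderedAddMonoid G] [Module ℚ G]

lemma vle_iff {x y : G} : vle x y ↔ ∃ m : ℕ, |y| ≤ m • |x| := by
  simp only [vle, vlt, not_forall, not_lt]

lemma qsmul_nonneg {q : ℚ} (hq : 0 ≤ q) {x : G} (hx : 0 ≤ x) : 0 ≤ q • x := by
  by_contra hcon
  push_neg at hcon
  have hden : (q.den : ℚ) • (q • x) = (q.num : ℚ) • x := by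
    rw [smul_smul, mul_comm, Rat.mul_den_eq_num]
  have h1 : 0 < q.den • (-(q • x)) := nsmul_pos (by simpa using hcon) q.den_pos.ne'
  rw [smul_neg] at h1
  have h2 : q.den • (q • x) < 0 := by simpa using h1
  rw [← Nat.cast_smul_eq_nsmul ℚ, hden] at h2
  have h3 : (0:ℤ) ≤ q.num := Rat.num_nonneg.2 hq
  have h4 : 0 ≤ (q.num : ℚ) • x := by
    rw [Int.cast_smul_eq_zsmul]
    lift q.num to ℕ using h3 with m
    rw [natCast_zsmul]
    exact nsmul_nonneg hx m
  exact absurd h2 (not_lt.2 h4)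

lemma qsmul_pos {q : ℚ} (hq : 0 < q) {x : G} (hx : 0 < x) : 0 < q • x := by
  rcases (qsmul_nonneg hq.le hx.le).lt_or_eq with h | h
  · exact h
  · exfalso
    have : x = q⁻¹ • (q • x) := by rw [smul_smul, inv_mul_cancel₀ hq.ne', one_smul]
    rw [← h, smul_zero] at this
    exact absurd this.symm hx.ne

/-- monotone in the element, nonneg scalar -/
lemma qsmul_le_left {q : ℚ} (hq : 0 ≤ q) {a b : G} (hab : a ≤ b) : q • a ≤ q • b := by
  have := qsmul_nonneg hq (sub_nonneg.2 hab)
  rw [smul_sub] at this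
  exact sub_nonneg.1 this

lemma qsmul_le_left_of_nonpos {q : ℚ} (hq : q ≤ 0) {a b : G} (hab : a ≤ b) :
    q • b ≤ q • a := by
  have := qsmul_le_left (q := -q) (by linarith) hab
  rw [neg_smul, neg_smul] at this
  exact neg_le_neg_iff.1 this

lemma qsmul_lt_left {q : ℚ} (hq : 0 < q) {a b : G} (hab : a < b) : q • a < q • b := by
  have := qsmul_pos hq (sub_pos.2 hab)
  rw [smul_sub] at this
  exact sub_pos.1 this

/-- monotone in the scalar, positive element -/
lemma qsmul_le_right {a b : ℚ} (hab : a ≤ b) {x : G} (hx : 0 ≤ x) : a • x ≤ b • x := by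
  have := qsmul_nonneg (sub_nonneg.2 hab) hx
  rw [sub_smul] at this
  exact sub_nonneg.1 this

lemma qsmul_lt_right {a b : ℚ} (hab : a < b) {x : G} (hx : 0 < x) : a • x < b • x := by
  have := qsmul_pos (sub_pos.2 hab) hx
  rw [sub_smul] at this
  exact sub_pos.1 this

lemma lt_of_qsmul_lt {a b : ℚ} {x : G} (h : a • x < b • x) (hx : 0 < x) : a < b := by
  by_contra hcon
  push_neg at hcon
  exact absurd h (not_lt.2 (qsmul_le_right hcon hx.le))

lemma abs_qsmul' (q : ℚ) {x : G} (hx : 0 < x) : |q • x| = |q| • x := by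
  rcases le_or_gt 0 q with h | h
  · rw [abs_of_nonneg (qsmul_nonneg h hx.le), abs_of_nonneg h]
  · have h1 : 0 < (-q) • x := qsmul_pos (by linarith) hx
    rw [neg_smul] at h1
    rw [abs_of_neg (neg_pos.1 h1), abs_of_neg h, neg_smul]

/-- Basic properties of `ratio g h` for positive archimedean-equivalent `g h`. -/
lemma ratio_spec {g h : G} (hg : 0 < g) (hh : 0 < h) (harch : archEquiv h g) :
    (∀ q : ℚ, (q : ℝ) < ratio g h → q • h < g) ∧
    (∀ q : ℚ, ratio g h < (q : ℝ) → g ≤ q • h) ∧ 0 < ratio g h := by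
  obtain ⟨N, hN1, hN2⟩ := harch
  rw [abs_of_pos hg, abs_of_pos hh] at hN1 hN2
  have hne : Set.Nonempty {r : ℝ | ∃ q : ℚ, r = (q : ℝ) ∧ q • h < g} :=
    ⟨0, 0, by norm_num, by simpa using hg⟩
  have hbdd : BddAbove {r : ℝ | ∃ q : ℚ, r = (q : ℝ) ∧ q • h < g} := by
    refine ⟨(N : ℝ), ?_⟩
    rintro r ⟨q, rfl, hq⟩
    have h1 : q • h < (N : ℚ) • h := by
      rw [Nat.cast_smul_eq_nsmul]
      exact lt_of_lt_of_le hq hN1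
    have h2 : q < (N : ℚ) := lt_of_qsmul_lt h1 hh
    exact_mod_cast h2.le
  refine ⟨?_, ?_, ?_⟩
  · intro q hq
    obtain ⟨r, ⟨q', rfl, hq'⟩, hlt⟩ := exists_lt_of_lt_csSup hne hq
    have hqq' : q < q' := by exact_mod_cast hlt
    exact lt_trans (qsmul_lt_right hqq' hh) hq'
  · intro q hq
    by_contra hcon
    push_neg at hcon
    have : (q : ℝ) ≤ ratio g h := le_csSup hbdd ⟨q, rfl, hcon⟩
    exact absurd hq (not_lt.2 this)
  · have hN0 : N ≠ 0 := by
      rintro rfl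
      simp only [zero_smul] at hN2
      exact absurd hN2 (not_le.2 hh)
    have hNQ : (0 : ℚ) < (N : ℚ) := by exact_mod_cast Nat.pos_of_ne_zero hN0
    have h1 : ((N : ℚ)⁻¹) • h ≤ g := by
      have h2 : ((N : ℚ)⁻¹) • h ≤ ((N : ℚ)⁻¹) • ((N : ℚ) • g) := by
        apply qsmul_le_left (by positivity)
        rw [Nat.cast_smul_eq_nsmul]; exact hN2
      rw [smul_smul, inv_mul_cancel₀ hNQ.ne', one_smul] at h2
      exact h2
    have h3 : ((1 : ℚ)/(2*N)) • h < g := by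
      refine lt_of_lt_of_le ?_ h1
      refine qsmul_lt_right ?_ hh
      rw [← one_div]
      exact one_div_lt_one_div_of_lt hNQ (by nlinarith)
    have h4 : (((1 : ℚ)/(2*N) : ℚ) : ℝ) ≤ ratio g h := le_csSup hbdd ⟨_, rfl, h3⟩
    have h5 : (0 : ℝ) < (((1 : ℚ)/(2*N) : ℚ) : ℝ) := by
      have : (0:ℚ) < (1 : ℚ)/(2*N) := by positivity
      exact_mod_cast this
    linarith

/-- Key approximation: if `q < Σ cᵢ Rᵢ` then `q•h < Σ cᵢ•gᵢ`. -/
lemma key_approx {ι : Type*} (K : Finset ι) (c : ι → ℚ) (g : ι → G) (h : G)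
    (hh : 0 < h) (R : ι → ℝ)
    (hlow : ∀ i ∈ K, ∀ q : ℚ, (q : ℝ) < R i → q • h < g i)
    (hhigh : ∀ i ∈ K, ∀ q : ℚ, R i < (q : ℝ) → g i ≤ q • h)
    (q : ℚ) (hq : (q : ℝ) < ∑ i ∈ K, (c i : ℝ) * R i) :
    q • h < ∑ i ∈ K, c i • g i := by
  classical
  set r : ℝ := ∑ i ∈ K, (c i : ℝ) * R i with hr
  set Sn : ℝ := ∑ i ∈ K, |(c i : ℝ)| with hSn
  have hSn0 : 0 ≤ Sn := Finset.sum_nonneg fun i _ => abs_nonneg _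
  set ε : ℝ := (r - q) / (Sn + 1) with hεdef
  have hε : 0 < ε := div_pos (by linarith) (by linarith)
  have hex : ∀ i : ι, ∃ qi : ℚ, i ∈ K →
      ((c i : ℝ) * R i - |(c i : ℝ)| * ε ≤ (c i : ℝ) * (qi : ℝ) ∧
        (c i * qi) • h ≤ c i • g i) := by
    intro i
    rcases lt_trichotomy (c i) 0 with hci | hci | hci
    · obtain ⟨qi, h1, h2⟩ := exists_rat_btwn (show R i < R i + ε by linarith)
      refine ⟨qi, fun hi => ⟨?_, ?_⟩⟩
      · have hci' : (c i : ℝ) < 0 := by exact_mod_cast hci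
        rw [abs_of_neg hci']
        nlinarith
      · rw [mul_smul]
        exact qsmul_le_left_of_nonpos hci.le (hhigh i hi qi h1)
    · exact ⟨0, fun _ => by simp [hci]⟩
    · obtain ⟨qi, h1, h2⟩ := exists_rat_btwn (show R i - ε < R i by linarith)
      refine ⟨qi, fun hi => ⟨?_, ?_⟩⟩
      · have hci' : (0 : ℝ) < (c i : ℝ) := by exact_mod_cast hci
        rw [abs_of_pos hci']
        nlinarith
      · rw [mul_smul]
        exact qsmul_le_left hci.le (hlow i hi qi h2).le
  choose qf hqf using hex
  set Q : ℚ := ∑ i ∈ K, c i * qf i with hQ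
  have hQle : Q • h ≤ ∑ i ∈ K, c i • g i := by
    rw [hQ, Finset.sum_smul]
    exact Finset.sum_le_sum fun i hi => (hqf i hi).2
  have hQr : r - ε * Sn ≤ (Q : ℝ) := by
    have hcast : (Q : ℝ) = ∑ i ∈ K, (c i : ℝ) * (qf i : ℝ) := by
      rw [hQ]; push_cast; ring_nf
    rw [hcast]
    have e1 : r - ε * Sn = ∑ i ∈ K, ((c i : ℝ) * R i - |(c i : ℝ)| * ε) := by
      rw [Finset.sum_sub_distrib, ← Finset.sum_mul, hr, hSn]
      ring
    rw [e1]
    exact Finset.sum_le_sum fun i hi => (hqf i hi).1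
  have hεs : ε * (Sn + 1) = r - q := by
    rw [hεdef]; field_simp
  have hqQ : q < Q := by
    have h1 : ε * Sn < r - q := by nlinarith
    have h2 : (q : ℝ) < (Q : ℝ) := by linarith
    exact_mod_cast h2
  exact lt_of_lt_of_le (qsmul_lt_right hqQ hh) hQle

lemma key_approx' {ι : Type*} (K : Finset ι) (c : ι → ℚ) (g : ι → G) (h : G)
    (hh : 0 < h) (R : ι → ℝ)
    (hlow : ∀ i ∈ K, ∀ q : ℚ, (q : ℝ) < R i → q • h < g i)
    (hhigh : ∀ i ∈ K, ∀ q : ℚ, R i < (q : ℝ) → g i ≤ q • h)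
    (q : ℚ) (hq : ∑ i ∈ K, (c i : ℝ) * R i < (q : ℝ)) :
    ∑ i ∈ K, c i • g i < q • h := by
  have key := key_approx K (fun i => -c i) g h hh R hlow hhigh (-q)
    (by push_cast; simp only [neg_mul, Finset.sum_neg_distrib]; exact neg_lt_neg hq)
  simp only [neg_smul, Finset.sum_neg_distrib] at key
  exact neg_lt_neg_iff.1 key

/-- Tail terms of strictly bigger valuation are small. -/
lemma tail_small {ι : Type*} (T : Finset ι) (c : ι → ℚ) (g : ι → G) (h : G)
    (hh : 0 < h)
    (hsmall : ∀ i ∈ T, c i ≠ 0 → 0 < g i ∧ ∀ m : ℕ, m • g i < h) :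
    ∀ q : ℚ, 0 < q → |∑ i ∈ T, c i • g i| < q • h := by
  classical
  refine Finset.sum_induction (fun i => c i • g i)
    (fun x => ∀ q : ℚ, 0 < q → |x| < q • h) ?_ ?_ ?_
  · intro a b ha hb q hq
    calc |a + b| ≤ |a| + |b| := abs_add_le a b
      _ < (q/2) • h + (q/2) • h :=
          add_lt_add (ha (q/2) (by positivity)) (hb (q/2) (by positivity))
      _ = q • h := by rw [← add_smul]; norm_num
  · intro q hq
    simpa using qsmul_pos hq hh
  · intro i hi q hq
    by_cases hci : c i = 0
    · simpa [hci] using qsmul_pos hq hh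
    obtain ⟨hgi, hm⟩ := hsmall i hi hci
    show |c i • g i| < q • h
    rw [abs_qsmul' _ hgi]
    obtain ⟨M, hM⟩ := exists_nat_gt (q⁻¹ * |c i|)
    have hd : (q⁻¹ * |c i|) • g i ≤ (M : ℚ) • g i := qsmul_le_right hM.le hgi.le
    have hMg : (M : ℚ) • g i < h := by
      rw [Nat.cast_smul_eq_nsmul]; exact hm M
    have h1 : (q⁻¹ * |c i|) • g i < h := lt_of_le_of_lt hd hMg
    have h2 : q • ((q⁻¹ * |c i|) • g i) < q • h := qsmul_lt_left hq h1
    rw [smul_smul, ← mul_assoc, mul_inv_cancel₀ hq.ne', one_mul] at h2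
    exact h2

end Helpers

/-- let `g₁, …, gₙ` be a valuation basis (positive, valuation
independent) of the divisible hull `⟨g₁, …, gₙ⟩_div` in a divisible ordered abelian
group, let `h > 0` represent the minimal valuation (= dominating archimedean class)
occurring among the monomials `sᵢ gᵢ` with integer `sᵢ ≠ 0`, occurring at least
once.  Then `s₁g₁ + … + sₙgₙ > 0` iff the real number
`Σ {sᵢ · (gᵢ/h) : sᵢ ≠ 0, gᵢ ∼ h}` is positive. -/
theorem sign_by_dominant_component (G : Type*) [AddCommGroup G] [LinearOrder G] [IsOrderedAddMonoid G]
    [Module ℚ G] {n : ℕ} (g : Fin n → G) (hgpos : ∀ i, 0 < g i)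
    (hvi : ∀ q : Fin n → ℚ, ∀ i, q i ≠ 0 → (∀ j, q j ≠ 0 → vle (g i) (g j)) →
      veq (∑ j, q j • g j) (g i))
    (h : G) (hh : 0 < h) (s : Fin n → ℤ)
    (hmin : ∀ i, s i ≠ 0 → vle h (g i))
    (hK : ∃ i, s i ≠ 0 ∧ archEquiv h (g i)) :
    (0 < ∑ i, s i • g i ↔
      0 < ∑ i, Set.indicator {i : Fin n | s i ≠ 0 ∧ archEquiv h (g i)}
        (fun i => (s i : ℝ) * ratio (g i) h) i) := by
  classical
  set c : Fin n → ℚ := fun i => (s i : ℚ) with hcdef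
  have hcs : ∀ i, c i • g i = s i • g i := fun i => Int.cast_smul_eq_zsmul ℚ (s i) (g i)
  have hcne : ∀ i, c i ≠ 0 ↔ s i ≠ 0 := by
    intro i; simp [hcdef]
  set K : Finset (Fin n) :=
    Finset.univ.filter (fun i => s i ≠ 0 ∧ archEquiv h (g i)) with hKdef
  -- rewrite the RHS as a filtered sum
  have hRHS : ∑ i, Set.indicator {i : Fin n | s i ≠ 0 ∧ archEquiv h (g i)}
      (fun i => (s i : ℝ) * ratio (g i) h) i
      = ∑ i ∈ K, (s i : ℝ) * ratio (g i) h := by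
    rw [Finset.sum_indicator_eq_sum_filter]
    refine Finset.sum_congr ?_ fun _ _ => rfl
    refine Finset.filter_congr fun i _ => by simp [Set.mem_setOf_eq]
  -- ratio properties on K
  have hKprop : ∀ i ∈ K, (∀ q : ℚ, (q : ℝ) < ratio (g i) h → q • h < g i) ∧
      (∀ q : ℚ, ratio (g i) h < (q : ℝ) → g i ≤ q • h) ∧ 0 < ratio (g i) h := by
    intro i hi
    rw [hKdef, Finset.mem_filter] at hi
    exact ratio_spec (hgpos i) hh hi.2.2
  set R : Fin n → ℝ := fun i => ratio (g i) h with hRdef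
  set r : ℝ := ∑ i ∈ K, (c i : ℝ) * R i with hrdef
  have hrRHS : ∑ i ∈ K, (s i : ℝ) * ratio (g i) h = r := by
    rw [hrdef]; exact Finset.sum_congr rfl fun i _ => by push_cast [hcdef, hRdef]; ring
  -- split the main sum
  set x : G := ∑ i ∈ K, c i • g i with hxdef
  set t : G := ∑ i ∈ Finset.univ.filter
    (fun i => ¬(s i ≠ 0 ∧ archEquiv h (g i))), c i • g i with htdef
  have hsplit : ∑ i, (s i) • g i = x + t := by
    rw [hxdef, htdef, Finset.sum_filter_add_sum_filter_not]
    exact (Finset.sum_congr rfl fun i _ => hcs i).symm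
  -- bounds on x
  have hxlow : ∀ q : ℚ, (q : ℝ) < r → q • h < x :=
    fun q hq => key_approx K c g h hh R
      (fun i hi => (hKprop i hi).1) (fun i hi => (hKprop i hi).2.1) q hq
  have hxhigh : ∀ q : ℚ, r < (q : ℝ) → x < q • h :=
    fun q hq => key_approx' K c g h hh R
      (fun i hi => (hKprop i hi).1) (fun i hi => (hKprop i hi).2.1) q hq
  -- the tail is small
  have ht : ∀ q : ℚ, 0 < q → |t| < q • h := by
    refine tail_small _ _ _ _ hh ?_
    intro i hi hci
    rw [Finset.mem_filter] at hi
    have hsi : s i ≠ 0 := (hcne i).1 hci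
    refine ⟨hgpos i, ?_⟩
    intro m
    by_contra hcon
    push_neg at hcon
    have hvle := hmin i hsi
    rw [vle_iff] at hvle
    obtain ⟨m', hm'⟩ := hvle
    rw [abs_of_pos hh, abs_of_pos (hgpos i)] at hm'
    apply hi.2
    refine ⟨hsi, ⟨max m m', ?_, ?_⟩⟩
    · rw [abs_of_pos hh, abs_of_pos (hgpos i)]
      calc g i ≤ m' • h := hm'
        _ ≤ (max m m') • h := nsmul_le_nsmul_left hh.le (le_max_right m m')
    · rw [abs_of_pos hh, abs_of_pos (hgpos i)]
      calc h ≤ m • g i := hcon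
        _ ≤ (max m m') • g i := nsmul_le_nsmul_left (hgpos i).le (le_max_left m m')
  -- if r = 0 we get a contradiction using valuation independence
  have hr0 : r = 0 → False := by
    intro hr0
    obtain ⟨i₀, hs₀, harch₀⟩ := hK
    have hc₀ : c i₀ ≠ 0 := (hcne i₀).2 hs₀
    have hmono : ∀ j, c j ≠ 0 → vle (g i₀) (g j) := by
      intro j hcj
      have hsj : s j ≠ 0 := (hcne j).1 hcj
      have h1 := hmin j hsj
      rw [vle_iff] at h1 ⊢
      obtain ⟨m1, hm1⟩ := h1
      obtain ⟨N, hN1, hN2⟩ := harch₀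
      exact ⟨N * m1, by
        calc |g j| ≤ m1 • |h| := hm1
          _ ≤ m1 • (N • |g i₀|) := nsmul_le_nsmul_right hN2 m1
          _ = (N * m1) • |g i₀| := (mul_nsmul _ N m1).symm⟩
    have hveq := hvi c i₀ hc₀ hmono
    -- from veq: ∃ m, g i₀ ≤ m • |y|, hence h ≤ M • |y|
    have h1 := hveq.1
    rw [vle_iff] at h1
    obtain ⟨m, hm⟩ := h1
    obtain ⟨N, hN1, hN2⟩ := harch₀
    rw [abs_of_pos hh, abs_of_pos (hgpos i₀)] at hN2
    set y : G := ∑ j, c j • g j with hydef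
    have hyx : y = x + t := by
      rw [hydef, ← hsplit]
      exact Finset.sum_congr rfl fun i _ => hcs i
    rw [abs_of_pos (hgpos i₀)] at hm
    have hhy : h ≤ (m * N) • |y| := by
      calc h ≤ N • g i₀ := hN2
        _ ≤ N • (m • |y|) := nsmul_le_nsmul_right hm N
        _ = (m * N) • |y| := (mul_nsmul _ m N).symm
    set M : ℕ := m * N + 1 with hMdef
    have hhy' : h ≤ M • |y| := by
      calc h ≤ (m * N) • |y| := hhy
        _ ≤ M • |y| := nsmul_le_nsmul_left (abs_nonneg y) (by omega)
    -- but |y| < (1/M) • h for suitable small bound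
    set q : ℚ := 1 / (2 * M) with hqdef
    have hM0 : (0:ℚ) < (M:ℚ) := by positivity
    have hq0 : 0 < q := by positivity
    have hx1 : x < q • h := hxhigh q (by rw [hr0]; exact_mod_cast hq0)
    have hx2 : (-q) • h < x := hxlow (-q) (by rw [hr0]; exact_mod_cast neg_neg_iff_pos.2 hq0)
    have hxabs : |x| < q • h := abs_lt.2 ⟨by rwa [← neg_smul], hx1⟩
    have htabs : |t| < q • h := ht q hq0
    have hyabs : |y| < (2 * q) • h := by
      calc |y| = |x + t| := by rw [hyx]
        _ ≤ |x| + |t| := abs_add_le x t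
        _ < q • h + q • h := add_lt_add hxabs htabs
        _ = (2 * q) • h := by rw [two_mul, add_smul]
    have hfin : M • |y| < h := by
      have h2 : (M : ℚ) • |y| < (M : ℚ) • ((2 * q) • h) := qsmul_lt_left hM0 hyabs
      have h3 : (M : ℚ) • ((2 * q) • h) = ((M : ℚ) * (2 * q)) • h := (smul_smul _ _ _)
      have h4 : (M : ℚ) * (2 * q) = 1 := by
        rw [hqdef]
        field_simp
      rw [← Nat.cast_smul_eq_nsmul ℚ M]
      calc (M : ℚ) • |y| < (M : ℚ) • ((2 * q) • h) := h2
        _ = ((M : ℚ) * (2 * q)) • h := h3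
        _ = (1 : ℚ) • h := by rw [h4]
        _ = h := one_smul _ _
    exact absurd hhy' (not_le.2 hfin)
  -- main case split
  rw [hRHS, hrRHS, hsplit]
  rcases lt_trichotomy (0 : ℝ) r with hr | hr | hr
  · refine iff_of_true ?_ hr
    obtain ⟨q, hq0, hqr⟩ := exists_rat_btwn hr
    have hq0' : 0 < q := by exact_mod_cast hq0
    have h1 : q • h < x := hxlow q hqr
    have h2 : -(q • h) < t := neg_lt_of_abs_lt (ht q hq0')
    have := add_lt_add h1 h2
    rwa [add_neg_cancel] at this
  · exact absurd hr.symm (by intro hr'; exact hr0 hr')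
  · refine iff_of_false ?_ (not_lt.2 hr.le)
    obtain ⟨q, hqr, hq0⟩ := exists_rat_btwn hr
    have hq0' : q < 0 := by exact_mod_cast hq0
    have h1 : x < q • h := hxhigh q hqr
    have h2 : t < (-q) • h := lt_of_le_of_lt (le_abs_self t) (ht (-q) (by linarith))
    rw [neg_smul] at h2
    have h3 := add_lt_add h1 h2
    rw [add_neg_cancel] at h3
    exact not_lt.2 h3.le
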